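/- arXiv:2106.13949 — 4 statements merged into one kernel-verified Lean document; each statement's English description precedes it below -/
import Mathlib

section
/- Let A, B, X, Y be bounded linear operators on a complex Hilbert space H. Then w(AXB ± BYA) ≤ 2√2 · ‖B‖ · max{‖X‖, ‖Y‖} · √( w(A)² − (1/4)| ‖Re(A) + Im(A)‖² − ‖Re(A) − Im(A)‖² | ). -/
open ContinuousLinearMap Complex

variable {H : Type*} [NormedAddCommGroup H] [InnerProductSpace ℂ H] [CompleteSpace H]

noncomputable def nrad (A : H →L[ℂ] H) : ℝ :=
  ⨆ x : {x : H // ‖x‖ = 1}, ‖(inner ℂ (A x) (x : H) : ℂ)‖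

noncomputable def reP (A : H →L[ℂ] H) : H →L[ℂ] H := (2 : ℂ)⁻¹ • (A + adjoint A)
noncomputable def imP (A : H →L[ℂ] H) : H →L[ℂ] H := (2 * Complex.I)⁻¹ • (A - adjoint A)

noncomputable def oabs (A : H →L[ℂ] H) : H →L[ℂ] H := cfc Real.sqrt (adjoint A * A)

noncomputable def opow (T : H →L[ℂ] H) (r : ℝ) : H →L[ℂ] H := cfc (fun t : ℝ => t ^ r) T

lemma nrad_nonneg (A : H →L[ℂ] H) : 0 ≤ nrad A :=
  Real.iSup_nonneg fun _ => norm_nonneg _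

lemma inner_le_nrad (A : H →L[ℂ] H) {x : H} (hx : ‖x‖ = 1) :
    ‖(inner ℂ (A x) x : ℂ)‖ ≤ nrad A := by
  have bdd : BddAbove (Set.range fun y : {y : H // ‖y‖ = 1} =>
      ‖(inner ℂ (A y) (y : H) : ℂ)‖) := by
    refine ⟨‖A‖, ?_⟩
    rintro r ⟨y, rfl⟩
    calc ‖(inner ℂ (A (y : H)) (y : H) : ℂ)‖ ≤ ‖A (y : H)‖ * ‖(y : H)‖ :=
          norm_inner_le_norm _ _
      _ ≤ (‖A‖ * ‖(y : H)‖) * ‖(y : H)‖ := by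
          gcongr; exact A.le_opNorm _
      _ = ‖A‖ := by rw [y.2]; ring
  exact le_ciSup bdd (⟨x, hx⟩ : {y : H // ‖y‖ = 1})

lemma nrad_le (T : H →L[ℂ] H) {M : ℝ} (hM : 0 ≤ M)
    (h : ∀ x : H, ‖x‖ = 1 → ‖(inner ℂ (T x) x : ℂ)‖ ≤ M) : nrad T ≤ M :=
  Real.iSup_le (fun i => h i i.2) hM

/-- For a self-adjoint operator, a bound on the quadratic form gives a bound on the norm. -/
lemma sa_norm_le (S : H →L[ℂ] H) (hS : adjoint S = S) {M : ℝ} (hM : 0 ≤ M)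
    (h : ∀ x : H, ‖x‖ = 1 → ‖(inner ℂ (S x) x : ℂ)‖ ≤ M) : ‖S‖ ≤ M := by
  have h' : ∀ x : H, ‖(inner ℂ (S x) x : ℂ)‖ ≤ M * ‖x‖ ^ 2 := by
    intro x
    rcases eq_or_ne x 0 with rfl | hx
    · simp
    · have hn : (0:ℝ) < ‖x‖ := norm_pos_iff.2 hx
      have hu : ‖(‖x‖⁻¹ : ℂ) • x‖ = 1 := by
        rw [norm_smul]
        simp only [norm_inv, Complex.norm_real, Real.norm_eq_abs,
          _root_.abs_of_nonneg hn.le]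
        exact inv_mul_cancel₀ hn.ne'
      have h1 := h _ hu
      have e : (inner ℂ (S ((‖x‖⁻¹ : ℂ) • x)) ((‖x‖⁻¹ : ℂ) • x) : ℂ)
          = (‖x‖⁻¹ : ℂ) * (starRingEnd ℂ (‖x‖⁻¹ : ℂ)) * inner ℂ (S x) x := by
        rw [map_smul, inner_smul_left, inner_smul_right]
        ring
      rw [e] at h1
      have hnorm : ‖(‖x‖⁻¹ : ℂ) * (starRingEnd ℂ (‖x‖⁻¹ : ℂ)) * (inner ℂ (S x) x : ℂ)‖
          = ‖x‖⁻¹ * ‖x‖⁻¹ * ‖(inner ℂ (S x) x : ℂ)‖ := by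
        rw [norm_mul, norm_mul, RCLike.norm_conj]
        simp only [norm_inv, Complex.norm_real, Real.norm_eq_abs,
          _root_.abs_of_nonneg hn.le]
      rw [hnorm] at h1
      calc ‖(inner ℂ (S x) x : ℂ)‖
          = (‖x‖ * ‖x‖) * (‖x‖⁻¹ * ‖x‖⁻¹ * ‖(inner ℂ (S x) x : ℂ)‖) := by
            field_simp
        _ ≤ (‖x‖ * ‖x‖) * M := by
            exact mul_le_mul_of_nonneg_left h1 (mul_pos hn hn).le
        _ = M * ‖x‖ ^ 2 := by ring
  have key : ∀ x y : H, ((inner ℂ (S x) y : ℂ)).re ≤ M / 2 * (‖x‖ ^ 2 + ‖y‖ ^ 2) := by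
    intro x y
    have e2 : (inner ℂ (S y) x : ℂ) = starRingEnd ℂ (inner ℂ (S x) y) := by
      calc (inner ℂ (S y) x : ℂ) = inner ℂ ((adjoint S) y) x := by rw [hS]
        _ = inner ℂ y (S x) := adjoint_inner_left S x y
        _ = starRingEnd ℂ (inner ℂ (S x) y) := (inner_conj_symm y (S x)).symm
    have e1 : (inner ℂ (S (x+y)) (x+y) : ℂ) - inner ℂ (S (x-y)) (x-y)
        = 2 * (inner ℂ (S x) y + inner ℂ (S y) x) := by
      simp only [map_add, map_sub, inner_add_left, inner_add_right, inner_sub_left,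
        inner_sub_right]
      ring
    have e3 : ((inner ℂ (S (x+y)) (x+y) : ℂ)).re - ((inner ℂ (S (x-y)) (x-y) : ℂ)).re
        = 4 * ((inner ℂ (S x) y : ℂ)).re := by
      have e1' : (inner ℂ (S (x+y)) (x+y) : ℂ) - inner ℂ (S (x-y)) (x-y)
          = ((4 * ((inner ℂ (S x) y : ℂ)).re : ℝ) : ℂ) := by
        rw [e1, e2, Complex.add_conj]
        push_cast
        ring
      have := congrArg Complex.re e1'
      simpa using this
    have b1 : ((inner ℂ (S (x+y)) (x+y) : ℂ)).re ≤ M * ‖x+y‖ ^ 2 :=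
      le_trans (Complex.re_le_norm _) (h' (x+y))
    have b2 : -((inner ℂ (S (x-y)) (x-y) : ℂ)).re ≤ M * ‖x-y‖ ^ 2 := by
      have h1 : |((inner ℂ (S (x-y)) (x-y) : ℂ)).re| ≤ M * ‖x-y‖ ^ 2 :=
        le_trans (Complex.abs_re_le_norm _) (h' (x-y))
      linarith [(abs_le.1 h1).1]
    have par := parallelogram_law_with_norm ℂ x y
    nlinarith [b1, b2, e3, par]
  have norm_app : ∀ x : H, ‖S x‖ ≤ M * ‖x‖ := by
    intro x
    rcases eq_or_ne (S x) 0 with h0 | h0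
    · rw [h0, norm_zero]; positivity
    rcases eq_or_ne x 0 with rfl | hx
    · simp at h0
    have hnx : (0:ℝ) < ‖x‖ := norm_pos_iff.2 hx
    have hns : (0:ℝ) < ‖S x‖ := norm_pos_iff.2 h0
    set y : H := ((‖x‖ / ‖S x‖ : ℝ) : ℂ) • S x with hy
    have hny : ‖y‖ = ‖x‖ := by
      rw [hy, norm_smul, Complex.norm_real, Real.norm_eq_abs,
        _root_.abs_of_nonneg (div_nonneg hnx.le hns.le), div_mul_cancel₀ _ hns.ne']
    have hre : ((inner ℂ (S x) y : ℂ)).re = ‖x‖ * ‖S x‖ := by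
      rw [hy, inner_smul_right]
      have hinner : (inner ℂ (S x) (S x) : ℂ) = ((‖S x‖ ^ 2 : ℝ) : ℂ) := by
        rw [inner_self_eq_norm_sq_to_K]
        norm_cast
      rw [hinner, ← Complex.ofReal_mul, Complex.ofReal_re]
      field_simp
    have := key x y
    rw [hre, hny] at this
    have : ‖x‖ * ‖S x‖ ≤ M * ‖x‖ ^ 2 := by linarith
    calc ‖S x‖ = (‖x‖ * ‖S x‖) / ‖x‖ := by field_simp
      _ ≤ (M * ‖x‖ ^ 2) / ‖x‖ := by gcongr
      _ = M * ‖x‖ := by field_simp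
  exact S.opNorm_le_bound hM norm_app

lemma inner_reP (A : H →L[ℂ] H) (x : H) :
    (inner ℂ (reP A x) x : ℂ) = (((inner ℂ (A x) x : ℂ)).re : ℂ) := by
  have ha : (inner ℂ ((adjoint A) x) x : ℂ) = starRingEnd ℂ (inner ℂ (A x) x) := by
    rw [adjoint_inner_left, ← inner_conj_symm]
  simp only [reP, ContinuousLinearMap.smul_apply, ContinuousLinearMap.add_apply,
    inner_smul_left, inner_add_left, ha]
  rw [Complex.add_conj, map_inv₀, map_ofNat]
  push_cast
  ring

lemma inner_imP (A : H →L[ℂ] H) (x : H) :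
    (inner ℂ (imP A x) x : ℂ) = -(((inner ℂ (A x) x : ℂ)).im : ℂ) := by
  have ha : (inner ℂ ((adjoint A) x) x : ℂ) = starRingEnd ℂ (inner ℂ (A x) x) := by
    rw [adjoint_inner_left, ← inner_conj_symm]
  simp only [imP, ContinuousLinearMap.smul_apply, ContinuousLinearMap.sub_apply,
    inner_smul_left, inner_sub_left, ha]
  rw [Complex.sub_conj, map_inv₀, map_mul, map_ofNat, Complex.conj_I]
  have hI := Complex.I_ne_zero
  field_simp
  push_cast
  ring

lemma adjoint_reP (A : H →L[ℂ] H) : adjoint (reP A) = reP A := by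
  have : IsSelfAdjoint (reP A) := by
    rw [IsSelfAdjoint]
    simp only [reP, star_smul, star_add, star_eq_adjoint, adjoint_adjoint]
    rw [add_comm (adjoint A) A]
    congr 1
    simp [Complex.ext_iff]
  rwa [← ContinuousLinearMap.star_eq_adjoint]

lemma adjoint_imP (A : H →L[ℂ] H) : adjoint (imP A) = imP A := by
  have : IsSelfAdjoint (imP A) := by
    rw [IsSelfAdjoint]
    simp only [imP, star_smul, star_sub, star_eq_adjoint, adjoint_adjoint]
    rw [show adjoint A - A = -(A - adjoint A) by abel]
    rw [smul_neg, ← neg_smul]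
    congr 1
    simp [Complex.ext_iff]
  rwa [← ContinuousLinearMap.star_eq_adjoint]

lemma normS_le (A : H →L[ℂ] H) :
    ‖reP A + imP A‖ ≤ Real.sqrt 2 * nrad A ∧
    ‖reP A - imP A‖ ≤ Real.sqrt 2 * nrad A := by
  have hM : 0 ≤ Real.sqrt 2 * nrad A :=
    mul_nonneg (Real.sqrt_nonneg 2) (nrad_nonneg A)
  constructor
  · apply sa_norm_le _ (by rw [map_add, adjoint_reP, adjoint_imP]) hM
    intro x hx
    set z : ℂ := inner ℂ (A x) x with hzdef
    have e : (inner ℂ ((reP A + imP A) x) x : ℂ) = ((z.re - z.im : ℝ) : ℂ) := by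
      simp only [ContinuousLinearMap.add_apply, inner_add_left, inner_reP, inner_imP]
      push_cast; ring
    rw [e, Complex.norm_real]
    have hsq : (z.re - z.im) ^ 2 ≤ 2 * ‖z‖ ^ 2 := by
      have : ‖z‖ ^ 2 = z.re ^ 2 + z.im ^ 2 := by
        rw [Complex.sq_norm, Complex.normSq_apply]; ring
      nlinarith [sq_nonneg (z.re + z.im)]
    have h3 : |z.re - z.im| ≤ Real.sqrt 2 * ‖z‖ := by
      rw [← Real.sqrt_sq_eq_abs]
      calc Real.sqrt ((z.re - z.im) ^ 2) ≤ Real.sqrt (2 * ‖z‖ ^ 2) := Real.sqrt_le_sqrt hsq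
        _ = Real.sqrt 2 * ‖z‖ := by
          rw [Real.sqrt_mul (by norm_num), Real.sqrt_sq (norm_nonneg z)]
    calc |z.re - z.im| ≤ Real.sqrt 2 * ‖z‖ := h3
      _ ≤ Real.sqrt 2 * nrad A :=
        mul_le_mul_of_nonneg_left (inner_le_nrad A hx) (Real.sqrt_nonneg 2)
  · apply sa_norm_le _ (by rw [map_sub, adjoint_reP, adjoint_imP]) hM
    intro x hx
    set z : ℂ := inner ℂ (A x) x with hzdef
    have e : (inner ℂ ((reP A - imP A) x) x : ℂ) = ((z.re + z.im : ℝ) : ℂ) := by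
      simp only [ContinuousLinearMap.sub_apply, inner_sub_left, inner_reP, inner_imP]
      push_cast; ring
    rw [e, Complex.norm_real]
    have hsq : (z.re + z.im) ^ 2 ≤ 2 * ‖z‖ ^ 2 := by
      have : ‖z‖ ^ 2 = z.re ^ 2 + z.im ^ 2 := by
        rw [Complex.sq_norm, Complex.normSq_apply]; ring
      nlinarith [sq_nonneg (z.re - z.im)]
    have h3 : |z.re + z.im| ≤ Real.sqrt 2 * ‖z‖ := by
      rw [← Real.sqrt_sq_eq_abs]
      calc Real.sqrt ((z.re + z.im) ^ 2) ≤ Real.sqrt (2 * ‖z‖ ^ 2) := Real.sqrt_le_sqrt hsq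
        _ = Real.sqrt 2 * ‖z‖ := by
          rw [Real.sqrt_mul (by norm_num), Real.sqrt_sq (norm_nonneg z)]
    calc |z.re + z.im| ≤ Real.sqrt 2 * ‖z‖ := h3
      _ ≤ Real.sqrt 2 * nrad A :=
        mul_le_mul_of_nonneg_left (inner_le_nrad A hx) (Real.sqrt_nonneg 2)

lemma quad_identity (A : H →L[ℂ] H) (x : H) :
    ‖(reP A + imP A) x‖ ^ 2 + ‖(reP A - imP A) x‖ ^ 2 = ‖A x‖ ^ 2 + ‖adjoint A x‖ ^ 2 := by
  have p := parallelogram_law_with_norm ℂ (reP A x) (imP A x)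
  have q := parallelogram_law_with_norm ℂ (A x) (adjoint A x)
  have h1 : ‖reP A x‖ = ‖A x + adjoint A x‖ / 2 := by
    simp only [reP, ContinuousLinearMap.smul_apply, ContinuousLinearMap.add_apply, norm_smul]
    norm_num
    ring
  have h2 : ‖imP A x‖ = ‖A x - adjoint A x‖ / 2 := by
    simp only [imP, ContinuousLinearMap.smul_apply, ContinuousLinearMap.sub_apply, norm_smul]
    rw [norm_inv, norm_mul, Complex.norm_I]
    norm_num
    ring
  have h1' : ‖reP A x‖ ^ 2 = ‖A x + adjoint A x‖ ^ 2 / 4 := by rw [h1]; ring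
  have h2' : ‖imP A x‖ ^ 2 = ‖A x - adjoint A x‖ ^ 2 / 4 := by rw [h2]; ring
  simp only [ContinuousLinearMap.add_apply, ContinuousLinearMap.sub_apply]
  nlinarith [p, q, h1', h2']

set_option maxHeartbeats 1600000 in
theorem stmt15 (A B X Y : H →L[ℂ] H) :
    nrad (A * X * B + B * Y * A)
      ≤ 2 * Real.sqrt 2 * ‖B‖ * max ‖X‖ ‖Y‖
        * Real.sqrt ((nrad A) ^ 2 - (1/4) * |‖reP A + imP A‖ ^ 2 - ‖reP A - imP A‖ ^ 2|)
    ∧ nrad (A * X * B - B * Y * A)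
      ≤ 2 * Real.sqrt 2 * ‖B‖ * max ‖X‖ ‖Y‖
        * Real.sqrt ((nrad A) ^ 2 - (1/4) * |‖reP A + imP A‖ ^ 2 - ‖reP A - imP A‖ ^ 2|) := by
  set w := nrad A with hw
  set a := ‖reP A + imP A‖ with ha
  set b := ‖reP A - imP A‖ with hb
  set t := w ^ 2 - (1/4) * |a ^ 2 - b ^ 2| with ht
  have hS := normS_le A
  have sq2 : Real.sqrt 2 * Real.sqrt 2 = 2 := Real.mul_self_sqrt (by norm_num)
  have ha2 : a ^ 2 ≤ 2 * w ^ 2 := by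
    have h := hS.1
    have hmm := mul_self_le_mul_self (norm_nonneg (reP A + imP A)) h
    calc a ^ 2 = a * a := sq a
      _ ≤ (Real.sqrt 2 * w) * (Real.sqrt 2 * w) := hmm
      _ = (Real.sqrt 2 * Real.sqrt 2) * w ^ 2 := by ring
      _ = 2 * w ^ 2 := by rw [sq2]
  have hb2 : b ^ 2 ≤ 2 * w ^ 2 := by
    have h := hS.2
    have hmm := mul_self_le_mul_self (norm_nonneg (reP A - imP A)) h
    calc b ^ 2 = b * b := sq b
      _ ≤ (Real.sqrt 2 * w) * (Real.sqrt 2 * w) := hmm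
      _ = (Real.sqrt 2 * Real.sqrt 2) * w ^ 2 := by ring
      _ = 2 * w ^ 2 := by rw [sq2]
  have hsum : a ^ 2 + b ^ 2 ≤ 4 * t := by
    rw [ht]
    rcases abs_cases (a ^ 2 - b ^ 2) with ⟨h, _⟩ | ⟨h, _⟩ <;> rw [h] <;> nlinarith
  have ht0 : 0 ≤ t := by nlinarith [sq_nonneg a, sq_nonneg b]
  -- pointwise bound
  have main : ∀ x : H, ‖x‖ = 1 →
      ‖(inner ℂ ((A * X * B) x) x : ℂ)‖ + ‖(inner ℂ ((B * Y * A) x) x : ℂ)‖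
        ≤ 2 * Real.sqrt 2 * ‖B‖ * max ‖X‖ ‖Y‖ * Real.sqrt t := by
    intro x hx
    have e1 : (inner ℂ ((A * X * B) x) x : ℂ) = inner ℂ (X (B x)) (adjoint A x) := by
      simp only [ContinuousLinearMap.mul_apply]
      exact (adjoint_inner_right A (X (B x)) x).symm
    have e2 : (inner ℂ ((B * Y * A) x) x : ℂ) = inner ℂ (Y (A x)) (adjoint B x) := by
      simp only [ContinuousLinearMap.mul_apply]
      exact (adjoint_inner_right B (Y (A x)) x).symm
    have hBx : ‖B x‖ ≤ ‖B‖ := by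
      calc ‖B x‖ ≤ ‖B‖ * ‖x‖ := B.le_opNorm x
        _ = ‖B‖ := by rw [hx, mul_one]
    have hBax : ‖adjoint B x‖ ≤ ‖B‖ := by
      calc ‖adjoint B x‖ ≤ ‖adjoint B‖ * ‖x‖ := (adjoint B).le_opNorm x
        _ = ‖B‖ := by rw [hx, mul_one, LinearIsometryEquiv.norm_map]
    have b1 : ‖(inner ℂ ((A * X * B) x) x : ℂ)‖ ≤ ‖X‖ * ‖B‖ * ‖adjoint A x‖ := by
      rw [e1]
      calc ‖(inner ℂ (X (B x)) (adjoint A x) : ℂ)‖ ≤ ‖X (B x)‖ * ‖adjoint A x‖ :=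
            norm_inner_le_norm _ _
        _ ≤ (‖X‖ * ‖B x‖) * ‖adjoint A x‖ := by gcongr; exact X.le_opNorm _
        _ ≤ (‖X‖ * ‖B‖) * ‖adjoint A x‖ := by gcongr
    have b2 : ‖(inner ℂ ((B * Y * A) x) x : ℂ)‖ ≤ ‖Y‖ * ‖B‖ * ‖A x‖ := by
      rw [e2]
      calc ‖(inner ℂ (Y (A x)) (adjoint B x) : ℂ)‖ ≤ ‖Y (A x)‖ * ‖adjoint B x‖ :=
            norm_inner_le_norm _ _
        _ ≤ (‖Y‖ * ‖A x‖) * ‖adjoint B x‖ := by gcongr; exact Y.le_opNorm _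
        _ ≤ (‖Y‖ * ‖A x‖) * ‖B‖ := by gcongr
        _ = ‖Y‖ * ‖B‖ * ‖A x‖ := by ring
    have hm : max ‖X‖ ‖Y‖ ≥ 0 := le_max_of_le_left (norm_nonneg X)
    have step1 : ‖(inner ℂ ((A * X * B) x) x : ℂ)‖ + ‖(inner ℂ ((B * Y * A) x) x : ℂ)‖
        ≤ max ‖X‖ ‖Y‖ * ‖B‖ * (‖A x‖ + ‖adjoint A x‖) := by
      have c1 : ‖X‖ * ‖B‖ * ‖adjoint A x‖ ≤ max ‖X‖ ‖Y‖ * ‖B‖ * ‖adjoint A x‖ :=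
        mul_le_mul_of_nonneg_right
          (mul_le_mul_of_nonneg_right (le_max_left _ _) (norm_nonneg B)) (norm_nonneg _)
      have c2 : ‖Y‖ * ‖B‖ * ‖A x‖ ≤ max ‖X‖ ‖Y‖ * ‖B‖ * ‖A x‖ :=
        mul_le_mul_of_nonneg_right
          (mul_le_mul_of_nonneg_right (le_max_right _ _) (norm_nonneg B)) (norm_nonneg _)
      have expand : max ‖X‖ ‖Y‖ * ‖B‖ * (‖A x‖ + ‖adjoint A x‖)
          = max ‖X‖ ‖Y‖ * ‖B‖ * ‖A x‖ + max ‖X‖ ‖Y‖ * ‖B‖ * ‖adjoint A x‖ := by ring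
      rw [expand]
      linarith [b1, b2, c1, c2]
    -- ‖A x‖ + ‖A† x‖ ≤ √2 √(‖Ax‖² + ‖A†x‖²) ≤ √2 √(4t) = 2√2 √t
    have hquad := quad_identity A x
    have hSx : ‖(reP A + imP A) x‖ ≤ a := by
      calc ‖(reP A + imP A) x‖ ≤ ‖reP A + imP A‖ * ‖x‖ := le_opNorm _ _
        _ = a := by rw [hx, mul_one]
    have hDx : ‖(reP A - imP A) x‖ ≤ b := by
      calc ‖(reP A - imP A) x‖ ≤ ‖reP A - imP A‖ * ‖x‖ := le_opNorm _ _
        _ = b := by rw [hx, mul_one]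
    have hAx2 : ‖A x‖ ^ 2 + ‖adjoint A x‖ ^ 2 ≤ 4 * t := by
      have h1 : ‖(reP A + imP A) x‖ ^ 2 ≤ a ^ 2 := by
        nlinarith [norm_nonneg ((reP A + imP A) x)]
      have h2 : ‖(reP A - imP A) x‖ ^ 2 ≤ b ^ 2 := by
        nlinarith [norm_nonneg ((reP A - imP A) x)]
      nlinarith
    have hAx : ‖A x‖ + ‖adjoint A x‖ ≤ 2 * Real.sqrt 2 * Real.sqrt t := by
      have hsq : (‖A x‖ + ‖adjoint A x‖) ^ 2 ≤ 2 * (4 * t) := by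
        nlinarith [sq_nonneg (‖A x‖ - ‖adjoint A x‖)]
      have : ‖A x‖ + ‖adjoint A x‖ ≤ Real.sqrt (2 * (4 * t)) := by
        rw [← Real.sqrt_sq (by positivity : (0:ℝ) ≤ ‖A x‖ + ‖adjoint A x‖)]
        exact Real.sqrt_le_sqrt hsq
      calc ‖A x‖ + ‖adjoint A x‖ ≤ Real.sqrt (2 * (4 * t)) := this
        _ = 2 * Real.sqrt 2 * Real.sqrt t := by
          rw [show (2:ℝ) * (4 * t) = 2 * (2:ℝ)^2 * t by ring]
          rw [Real.sqrt_mul (by positivity), Real.sqrt_mul (by norm_num),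
            Real.sqrt_sq (by norm_num : (0:ℝ) ≤ 2)]
          ring
    calc ‖(inner ℂ ((A * X * B) x) x : ℂ)‖ + ‖(inner ℂ ((B * Y * A) x) x : ℂ)‖
        ≤ max ‖X‖ ‖Y‖ * ‖B‖ * (‖A x‖ + ‖adjoint A x‖) := step1
      _ ≤ max ‖X‖ ‖Y‖ * ‖B‖ * (2 * Real.sqrt 2 * Real.sqrt t) := by
          gcongr
      _ = 2 * Real.sqrt 2 * ‖B‖ * max ‖X‖ ‖Y‖ * Real.sqrt t := by ring
  have hM0 : 0 ≤ 2 * Real.sqrt 2 * ‖B‖ * max ‖X‖ ‖Y‖ * Real.sqrt t := by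
    have hm : (0:ℝ) ≤ max ‖X‖ ‖Y‖ := le_max_of_le_left (norm_nonneg X)
    have := Real.sqrt_nonneg 2
    have := Real.sqrt_nonneg t
    positivity
  constructor
  · apply nrad_le _ hM0
    intro x hx
    have : ‖(inner ℂ ((A * X * B + B * Y * A) x) x : ℂ)‖
        ≤ ‖(inner ℂ ((A * X * B) x) x : ℂ)‖ + ‖(inner ℂ ((B * Y * A) x) x : ℂ)‖ := by
      simp only [ContinuousLinearMap.add_apply, inner_add_left]
      exact norm_add_le _ _
    exact this.trans (main x hx)
  · apply nrad_le _ hM0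
    intro x hx
    have : ‖(inner ℂ ((A * X * B - B * Y * A) x) x : ℂ)‖
        ≤ ‖(inner ℂ ((A * X * B) x) x : ℂ)‖ + ‖(inner ℂ ((B * Y * A) x) x : ℂ)‖ := by
      simp only [ContinuousLinearMap.sub_apply, inner_sub_left]
      exact norm_sub_le _ _
    exact this.trans (main x hx)
end

section
/- Let A and B be bounded linear operators on a complex Hilbert space H. Then w(AB ± BA) ≤ 2√2 · ‖B‖ · √( w(A)² − (1/4)| ‖Re(A) + Im(A)‖² − ‖Re(A) − Im(A)‖² | ). -/
open ContinuousLinearMap Complex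

variable {H : Type*} [NormedAddCommGroup H] [InnerProductSpace ℂ H] [CompleteSpace H]

set_option linter.unusedSectionVars false

lemma nrad_bddAbove (A : H →L[ℂ] H) :
    BddAbove (Set.range fun x : {x : H // ‖x‖ = 1} => ‖(inner ℂ (A x) (x : H) : ℂ)‖) := by
  refine ⟨‖A‖, fun r hr => ?_⟩
  obtain ⟨⟨x, hx⟩, rfl⟩ := hr
  calc ‖(inner ℂ (A x) (x : H) : ℂ)‖ ≤ ‖A x‖ * ‖x‖ := norm_inner_le_norm _ _
    _ ≤ ‖A‖ * ‖x‖ * ‖x‖ := by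
        have := A.le_opNorm x
        nlinarith [norm_nonneg x]
    _ = ‖A‖ := by rw [hx]; ring

lemma le_nrad (A : H →L[ℂ] H) (x : H) (hx : ‖x‖ = 1) :
    ‖(inner ℂ (A x) x : ℂ)‖ ≤ nrad A :=
  le_ciSup (nrad_bddAbove A) (⟨x, hx⟩ : {x : H // ‖x‖ = 1})

lemma le_nrad' (A : H →L[ℂ] H) (x : H) :
    ‖(inner ℂ (A x) x : ℂ)‖ ≤ nrad A * ‖x‖ ^ 2 := by
  rcases eq_or_ne x 0 with rfl | hx
  · simp
  have hn : ‖x‖ ≠ 0 := norm_ne_zero_iff.mpr hx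
  set c : ℂ := (‖x‖ : ℂ)⁻¹ with hc
  have hcn : ‖c‖ = ‖x‖⁻¹ := by
    rw [hc, norm_inv, Complex.norm_real, Real.norm_eq_abs,
      _root_.abs_of_nonneg (norm_nonneg x)]
  have hu : ‖c • x‖ = 1 := by rw [norm_smul, hcn]; field_simp
  have h := le_nrad A _ hu
  have he : (inner ℂ (A (c • x)) (c • x) : ℂ) = starRingEnd ℂ c * c * inner ℂ (A x) x := by
    rw [map_smul, inner_smul_left, inner_smul_right]; ring
  rw [he, norm_mul, norm_mul, RCLike.norm_conj, hcn] at h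
  have h2 : ‖(inner ℂ (A x) x : ℂ)‖ = (‖x‖⁻¹ * ‖x‖⁻¹ * ‖(inner ℂ (A x) x : ℂ)‖) * ‖x‖ ^ 2 := by
    rw [sq]; field_simp
  rw [h2]
  exact mul_le_mul_of_nonneg_right h (sq_nonneg _)

/-- Self-adjoint operators: a numerical-radius-type bound gives the norm bound. -/
lemma sa_norm_le_s16 (T : H →L[ℂ] H) (hT : adjoint T = T) {c : ℝ} (hc : 0 ≤ c)
    (h : ∀ x : H, ‖(inner ℂ (T x) x : ℂ)‖ ≤ c * ‖x‖ ^ 2) : ‖T‖ ≤ c := by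
  refine opNorm_le_bound _ hc fun x => ?_
  rcases eq_or_ne (T x) 0 with h0 | h0
  · simp only [h0, norm_zero]; positivity
  have hx : x ≠ 0 := by rintro rfl; simp at h0
  have hxpos : (0:ℝ) < ‖x‖ := norm_pos_iff.mpr hx
  have hTxpos : (0:ℝ) < ‖T x‖ := norm_pos_iff.mpr h0
  set r : ℝ := ‖x‖ / ‖T x‖ with hr
  have hrpos : 0 < r := div_pos hxpos hTxpos
  set y : H := (r : ℂ) • T x with hy
  have hny : ‖y‖ = ‖x‖ := by
    rw [hy, norm_smul, Complex.norm_real, Real.norm_eq_abs, _root_.abs_of_pos hrpos, hr]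
    field_simp
  have hsym : (inner ℂ (T y) x : ℂ) = starRingEnd ℂ (inner ℂ (T x) y) := by
    conv_lhs => rw [← hT]
    rw [adjoint_inner_left]
    exact (inner_conj_symm y (T x)).symm
  have hre : (inner ℂ (T x) y : ℂ) = ((r * ‖T x‖ ^ 2 : ℝ) : ℂ) := by
    rw [hy, inner_smul_right, inner_self_eq_norm_sq_to_K]
    rw [Complex.ofReal_mul, Complex.ofReal_pow]
    norm_num [RCLike.ofReal_alg]
  have key : (inner ℂ (T (x + y)) (x + y) : ℂ) - inner ℂ (T (x - y)) (x - y)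
      = 2 * (inner ℂ (T x) y + inner ℂ (T y) x) := by
    rw [map_add, map_sub]
    simp only [inner_add_left, inner_add_right, inner_sub_left, inner_sub_right]
    ring
  have hq : (4 : ℝ) * (r * ‖T x‖ ^ 2)
      = ((inner ℂ (T (x + y)) (x + y) : ℂ) - inner ℂ (T (x - y)) (x - y)).re := by
    rw [key, hsym, hre]
    simp [Complex.ext_iff, ← Complex.ofReal_pow]
    ring
  have hb : ((inner ℂ (T (x + y)) (x + y) : ℂ) - inner ℂ (T (x - y)) (x - y)).re
      ≤ c * ‖x + y‖ ^ 2 + c * ‖x - y‖ ^ 2 := by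
    calc ((inner ℂ (T (x + y)) (x + y) : ℂ) - inner ℂ (T (x - y)) (x - y)).re
        ≤ ‖(inner ℂ (T (x + y)) (x + y) : ℂ) - inner ℂ (T (x - y)) (x - y)‖ :=
          Complex.re_le_norm _
      _ ≤ ‖(inner ℂ (T (x + y)) (x + y) : ℂ)‖ + ‖(inner ℂ (T (x - y)) (x - y) : ℂ)‖ :=
          norm_sub_le _ _
      _ ≤ c * ‖x + y‖ ^ 2 + c * ‖x - y‖ ^ 2 := add_le_add (h _) (h _)
  have hpar : ‖x + y‖ ^ 2 + ‖x - y‖ ^ 2 = 2 * (‖x‖ ^ 2 + ‖y‖ ^ 2) := by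
    have := parallelogram_law_with_norm ℂ x y
    nlinarith [this]
  have hrT : r * ‖T x‖ ^ 2 = ‖x‖ * ‖T x‖ := by
    rw [hr]; field_simp
  have hfin : 4 * (‖x‖ * ‖T x‖) ≤ 4 * (c * ‖x‖ ^ 2) := by
    have h1 : 4 * (r * ‖T x‖ ^ 2) ≤ c * ‖x + y‖ ^ 2 + c * ‖x - y‖ ^ 2 := by
      rw [hq]; exact hb
    rw [hrT] at h1
    have h2 : c * ‖x + y‖ ^ 2 + c * ‖x - y‖ ^ 2 = 4 * (c * ‖x‖ ^ 2) := by
      have : c * (‖x + y‖ ^ 2 + ‖x - y‖ ^ 2) = c * (2 * (‖x‖ ^ 2 + ‖y‖ ^ 2)) := by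
        rw [hpar]
      rw [hny] at this
      nlinarith [this]
    linarith
  nlinarith [hfin, hxpos]

lemma quadform_reP (A : H →L[ℂ] H) (x : H) :
    (inner ℂ ((reP A) x) x : ℂ) = (((inner ℂ (A x) x : ℂ).re : ℝ) : ℂ) := by
  simp only [reP, coe_smul', Pi.smul_apply, add_apply, inner_smul_left, inner_add_left,
    ContinuousLinearMap.adjoint_inner_left]
  rw [← inner_conj_symm x (A x)]
  set z : ℂ := inner ℂ (A x) x
  simp [Complex.ext_iff]
  ring

lemma quadform_imP (A : H →L[ℂ] H) (x : H) :
    (inner ℂ ((imP A) x) x : ℂ) = ((-(inner ℂ (A x) x : ℂ).im : ℝ) : ℂ) := by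
  simp only [imP, coe_smul', Pi.smul_apply, sub_apply, inner_smul_left, inner_sub_left,
    ContinuousLinearMap.adjoint_inner_left]
  rw [← inner_conj_symm x (A x)]
  set z : ℂ := inner ℂ (A x) x
  simp [Complex.ext_iff, Complex.inv_re, Complex.inv_im, Complex.normSq_apply, div_eq_iff]
  ring

lemma abs_combo_le (z : ℂ) (a b : ℝ) (hab : a ^ 2 + b ^ 2 = z.re ^ 2 + z.im ^ 2) :
    |a + b| ≤ Real.sqrt 2 * ‖z‖ := by
  have hz : ‖z‖ = Real.sqrt (z.re ^ 2 + z.im ^ 2) := by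
    rw [Complex.norm_def, Complex.normSq_apply]
    ring_nf
  rw [hz, ← Real.sqrt_mul (by norm_num : (0:ℝ) ≤ 2), ← Real.sqrt_sq_eq_abs]
  apply Real.sqrt_le_sqrt
  nlinarith [sq_nonneg (a - b)]

lemma norm_add_pm (A : H →L[ℂ] H) : ‖reP A + imP A‖ ≤ Real.sqrt 2 * nrad A := by
  have hsa : adjoint (reP A + imP A) = reP A + imP A := by
    rw [map_add, adjoint_reP, adjoint_imP]
  refine sa_norm_le_s16 _ hsa (mul_nonneg (Real.sqrt_nonneg 2) (nrad_nonneg A)) fun x => ?_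
  have hval : (inner ℂ ((reP A + imP A) x) x : ℂ)
      = (((inner ℂ (A x) x : ℂ).re + -(inner ℂ (A x) x : ℂ).im : ℝ) : ℂ) := by
    rw [add_apply, inner_add_left, quadform_reP, quadform_imP]
    push_cast
    ring
  rw [hval, Complex.norm_real, Real.norm_eq_abs]
  set z : ℂ := inner ℂ (A x) x with hz
  calc |z.re + -z.im| ≤ Real.sqrt 2 * ‖z‖ := abs_combo_le z _ _ (by ring)
    _ ≤ Real.sqrt 2 * (nrad A * ‖x‖ ^ 2) :=
        mul_le_mul_of_nonneg_left (le_nrad' A x) (Real.sqrt_nonneg 2)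
    _ = Real.sqrt 2 * nrad A * ‖x‖ ^ 2 := by ring

lemma norm_sub_pm (A : H →L[ℂ] H) : ‖reP A - imP A‖ ≤ Real.sqrt 2 * nrad A := by
  have hsa : adjoint (reP A - imP A) = reP A - imP A := by
    rw [map_sub, adjoint_reP, adjoint_imP]
  refine sa_norm_le_s16 _ hsa (mul_nonneg (Real.sqrt_nonneg 2) (nrad_nonneg A)) fun x => ?_
  have hval : (inner ℂ ((reP A - imP A) x) x : ℂ)
      = (((inner ℂ (A x) x : ℂ).re + (inner ℂ (A x) x : ℂ).im : ℝ) : ℂ) := by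
    rw [sub_apply, inner_sub_left, quadform_reP, quadform_imP]
    push_cast
    ring
  rw [hval, Complex.norm_real, Real.norm_eq_abs]
  set z : ℂ := inner ℂ (A x) x with hz
  calc |z.re + z.im| ≤ Real.sqrt 2 * ‖z‖ := abs_combo_le z _ _ (by ring)
    _ ≤ Real.sqrt 2 * (nrad A * ‖x‖ ^ 2) :=
        mul_le_mul_of_nonneg_left (le_nrad' A x) (Real.sqrt_nonneg 2)
    _ = Real.sqrt 2 * nrad A * ‖x‖ ^ 2 := by ring

lemma apply_add (A : H →L[ℂ] H) (x : H) :
    A x = (reP A) x + Complex.I • (imP A) x := by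
  have hI : Complex.I * (2 * Complex.I)⁻¹ = 2⁻¹ := by
    field_simp
  simp only [reP, imP, coe_smul', Pi.smul_apply, add_apply, sub_apply, smul_smul, hI]
  module

lemma apply_sub (A : H →L[ℂ] H) (x : H) :
    (adjoint A) x = (reP A) x - Complex.I • (imP A) x := by
  have hI : Complex.I * (2 * Complex.I)⁻¹ = 2⁻¹ := by
    field_simp
  simp only [reP, imP, coe_smul', Pi.smul_apply, add_apply, sub_apply, smul_smul, hI]
  module

lemma sum_sq_eq (A : H →L[ℂ] H) (x : H) :
    ‖A x‖ ^ 2 + ‖(adjoint A) x‖ ^ 2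
      = ‖(reP A + imP A) x‖ ^ 2 + ‖(reP A - imP A) x‖ ^ 2 := by
  have p1 := parallelogram_law_with_norm ℂ ((reP A) x) (Complex.I • (imP A) x)
  have p2 := parallelogram_law_with_norm ℂ ((reP A) x) ((imP A) x)
  have hIn : ‖Complex.I • (imP A) x‖ = ‖(imP A) x‖ := by
    rw [norm_smul]; simp
  rw [apply_add A x, apply_sub A x]
  have e1 : ‖(reP A + imP A) x‖ = ‖(reP A) x + (imP A) x‖ := by simp
  have e2 : ‖(reP A - imP A) x‖ = ‖(reP A) x - (imP A) x‖ := by simp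
  rw [e1, e2]
  rw [hIn] at p1
  simp only [pow_two]
  linarith

set_option maxHeartbeats 1000000 in
theorem stmt16 (A B : H →L[ℂ] H) :
    nrad (A * B + B * A)
      ≤ 2 * Real.sqrt 2 * ‖B‖
        * Real.sqrt ((nrad A) ^ 2 - (1/4) * |‖reP A + imP A‖ ^ 2 - ‖reP A - imP A‖ ^ 2|)
    ∧ nrad (A * B - B * A)
      ≤ 2 * Real.sqrt 2 * ‖B‖
        * Real.sqrt ((nrad A) ^ 2 - (1/4) * |‖reP A + imP A‖ ^ 2 - ‖reP A - imP A‖ ^ 2|) := by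
  set w := nrad A with hw
  have hw0 : 0 ≤ w := nrad_nonneg A
  set a := ‖reP A + imP A‖ ^ 2 with ha
  set b := ‖reP A - imP A‖ ^ 2 with hb
  have hA1 : ‖reP A + imP A‖ ≤ Real.sqrt 2 * w := norm_add_pm A
  have hA2 : ‖reP A - imP A‖ ≤ Real.sqrt 2 * w := norm_sub_pm A
  have hs2 : Real.sqrt 2 ^ 2 = 2 := Real.sq_sqrt (by norm_num)
  have ha2 : a ≤ 2 * w ^ 2 := by
    rw [ha]
    calc ‖reP A + imP A‖ ^ 2 ≤ (Real.sqrt 2 * w) ^ 2 := by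
          apply sq_le_sq' _ hA1
          nlinarith [norm_nonneg (reP A + imP A), Real.sqrt_nonneg 2]
      _ = 2 * w ^ 2 := by rw [mul_pow, hs2]
  have hb2 : b ≤ 2 * w ^ 2 := by
    rw [hb]
    calc ‖reP A - imP A‖ ^ 2 ≤ (Real.sqrt 2 * w) ^ 2 := by
          apply sq_le_sq' _ hA2
          nlinarith [norm_nonneg (reP A - imP A), Real.sqrt_nonneg 2]
      _ = 2 * w ^ 2 := by rw [mul_pow, hs2]
  have ha0 : 0 ≤ a := by rw [ha]; positivity
  have hb0 : 0 ≤ b := by rw [hb]; positivity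
  have hmax : a + b ≤ 4 * w ^ 2 - |a - b| := by
    rcases le_total a b with hab | hab
    · rw [_root_.abs_of_nonpos (by linarith)]; linarith
    · rw [_root_.abs_of_nonneg (by linarith)]; linarith
  have hinner0 : 0 ≤ w ^ 2 - (1/4) * |a - b| := by
    rcases le_total a b with hab | hab
    · rw [_root_.abs_of_nonpos (by linarith)]; linarith
    · rw [_root_.abs_of_nonneg (by linarith)]; linarith
  have hS : ∀ x : H, ‖x‖ = 1 → ‖A x‖ ^ 2 + ‖(adjoint A) x‖ ^ 2 ≤ 4 * w ^ 2 - |a - b| := by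
    intro x hx
    have h1 : ‖(reP A + imP A) x‖ ^ 2 ≤ a := by
      rw [ha]
      have := (reP A + imP A).le_opNorm x
      rw [hx, mul_one] at this
      nlinarith [norm_nonneg ((reP A + imP A) x)]
    have h2 : ‖(reP A - imP A) x‖ ^ 2 ≤ b := by
      rw [hb]
      have := (reP A - imP A).le_opNorm x
      rw [hx, mul_one] at this
      nlinarith [norm_nonneg ((reP A - imP A) x)]
    rw [sum_sq_eq A x]
    linarith [hmax]
  have hRHS : 2 * Real.sqrt 2 * ‖B‖ * Real.sqrt (w ^ 2 - (1/4) * |a - b|)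
      = ‖B‖ * (Real.sqrt 2 * Real.sqrt (4 * w ^ 2 - |a - b|)) := by
    have h4 : (4 : ℝ) * w ^ 2 - |a - b| = 4 * (w ^ 2 - (1/4) * |a - b|) := by ring
    rw [h4, Real.sqrt_mul (by norm_num : (0:ℝ) ≤ 4),
      show Real.sqrt 4 = 2 by
        rw [show (4:ℝ) = 2 ^ 2 by norm_num, Real.sqrt_sq (by norm_num : (0:ℝ) ≤ 2)]]
    ring
  have hRHS0 : 0 ≤ 2 * Real.sqrt 2 * ‖B‖ * Real.sqrt (w ^ 2 - (1/4) * |a - b|) := by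
    positivity
  have hmain : ∀ (x : H), ‖x‖ = 1 →
      ‖(inner ℂ ((A * B) x) x : ℂ)‖ + ‖(inner ℂ ((B * A) x) x : ℂ)‖
        ≤ 2 * Real.sqrt 2 * ‖B‖ * Real.sqrt (w ^ 2 - (1/4) * |a - b|) := by
    intro x hx
    have hterm1 : ‖(inner ℂ ((A * B) x) x : ℂ)‖ ≤ ‖B‖ * ‖(adjoint A) x‖ := by
      have hinner : (inner ℂ ((A * B) x) x : ℂ) = inner ℂ (B x) ((adjoint A) x) := by
        rw [ContinuousLinearMap.mul_apply, ← ContinuousLinearMap.adjoint_inner_right]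
      rw [hinner]
      calc ‖(inner ℂ (B x) ((adjoint A) x) : ℂ)‖ ≤ ‖B x‖ * ‖(adjoint A) x‖ :=
            norm_inner_le_norm _ _
        _ ≤ ‖B‖ * ‖(adjoint A) x‖ := by
            have := B.le_opNorm x
            rw [hx, mul_one] at this
            nlinarith [norm_nonneg ((adjoint A) x)]
    have hterm2 : ‖(inner ℂ ((B * A) x) x : ℂ)‖ ≤ ‖B‖ * ‖A x‖ := by
      have hinner : (inner ℂ ((B * A) x) x : ℂ) = inner ℂ (A x) ((adjoint B) x) := by
        rw [ContinuousLinearMap.mul_apply, ← ContinuousLinearMap.adjoint_inner_right]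
      rw [hinner]
      calc ‖(inner ℂ (A x) ((adjoint B) x) : ℂ)‖ ≤ ‖A x‖ * ‖(adjoint B) x‖ :=
            norm_inner_le_norm _ _
        _ ≤ ‖B‖ * ‖A x‖ := by
            have h1 := (adjoint B).le_opNorm x
            rw [hx, mul_one] at h1
            have h2 : ‖adjoint B‖ = ‖B‖ := (ContinuousLinearMap.adjoint (𝕜 := ℂ) (E := H) (F := H)).norm_map B
            rw [h2] at h1
            nlinarith [norm_nonneg (A x)]
    have hsum : ‖A x‖ + ‖(adjoint A) x‖
        ≤ Real.sqrt 2 * Real.sqrt (4 * w ^ 2 - |a - b|) := by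
      rw [← Real.sqrt_mul (by norm_num : (0:ℝ) ≤ 2)]
      have hS' := hS x hx
      have hnn : 0 ≤ ‖A x‖ + ‖(adjoint A) x‖ := by positivity
      rw [show ‖A x‖ + ‖(adjoint A) x‖ = Real.sqrt ((‖A x‖ + ‖(adjoint A) x‖) ^ 2) by
        rw [Real.sqrt_sq hnn]]
      apply Real.sqrt_le_sqrt
      nlinarith [sq_nonneg (‖A x‖ - ‖(adjoint A) x‖)]
    rw [hRHS]
    calc ‖(inner ℂ ((A * B) x) x : ℂ)‖ + ‖(inner ℂ ((B * A) x) x : ℂ)‖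
        ≤ ‖B‖ * (‖A x‖ + ‖(adjoint A) x‖) := by
          have := add_le_add hterm1 hterm2
          linarith
      _ ≤ ‖B‖ * (Real.sqrt 2 * Real.sqrt (4 * w ^ 2 - |a - b|)) := by
          have hB0 : (0:ℝ) ≤ ‖B‖ := norm_nonneg B
          nlinarith [hsum]
  constructor
  · apply Real.iSup_le _ hRHS0
    rintro ⟨x, hx⟩
    calc ‖(inner ℂ ((A * B + B * A) x) x : ℂ)‖
        ≤ ‖(inner ℂ ((A * B) x) x : ℂ)‖ + ‖(inner ℂ ((B * A) x) x : ℂ)‖ := by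
          rw [add_apply, inner_add_left]
          exact norm_add_le _ _
      _ ≤ _ := hmain x hx
  · apply Real.iSup_le _ hRHS0
    rintro ⟨x, hx⟩
    calc ‖(inner ℂ ((A * B - B * A) x) x : ℂ)‖
        ≤ ‖(inner ℂ ((A * B) x) x : ℂ)‖ + ‖(inner ℂ ((B * A) x) x : ℂ)‖ := by
          rw [sub_apply, inner_sub_left]
          exact norm_sub_le _ _
      _ ≤ _ := hmain x hx
end

section
/- Let A and B be bounded linear operators on a complex Hilbert space H and let r ≥ 1. Then w(B*A)^r ≤ (1/2) ‖ |A|^{2r} + |B|^{2r} ‖ (Dragomir's inequality). -/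
open ContinuousLinearMap Complex

variable {H : Type*} [NormedAddCommGroup H] [InnerProductSpace ℂ H] [CompleteSpace H]

lemma contOn_rpow (r : ℝ) (hr : 0 ≤ r) (s : Set ℝ) :
    ContinuousOn (fun t : ℝ => t ^ r) s := fun t _ =>
  (Real.continuousAt_rpow_const t r (Or.inr hr)).continuousWithinAt

lemma young_aux {r s t : ℝ} (hr : 1 ≤ r) (hs : 0 ≤ s) (ht : 0 ≤ t) :
    r * s ^ (r - 1) * t - (r - 1) * s ^ r ≤ t ^ r := by
  rcases eq_or_lt_of_le hr with h1 | h1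
  · simp [← h1, Real.rpow_one]
  · have hr0 : (0:ℝ) < r := by linarith
    have hr1 : r - 1 ≠ 0 := by intro h; linarith [sub_eq_zero.mp h]
    have hcj : r.HolderConjugate (r / (r - 1)) := Real.HolderConjugate.conjExponent h1
    have h := Real.young_inequality_of_nonneg ht (Real.rpow_nonneg hs (r - 1)) hcj
    have hpow : (s ^ (r - 1)) ^ (r / (r - 1)) = s ^ r := by
      rw [← Real.rpow_mul hs]
      congr 1
      field_simp
    rw [hpow] at h
    have hqa : s ^ r / (r / (r - 1)) = s ^ r * (r - 1) / r := by
      field_simp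
    rw [hqa] at h
    have h2 : r * (t * s ^ (r - 1)) ≤ r * (t ^ r / r + s ^ r * (r - 1) / r) :=
      mul_le_mul_of_nonneg_left h hr0.le
    have h3 : r * (t ^ r / r + s ^ r * (r - 1) / r) = t ^ r + (r - 1) * s ^ r := by
      field_simp
    rw [h3] at h2
    nlinarith [h2]

lemma re_inner_real_smul (c : ℝ) (y z : H) :
    (inner ℂ ((c • y : H)) z : ℂ).re = c * (inner ℂ y z : ℂ).re := by
  rw [← algebraMap_smul ℂ c y, Complex.coe_algebraMap, inner_smul_left, Complex.conj_ofReal,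
    Complex.re_ofReal_mul]

lemma mccarthy (S : H →L[ℂ] H) (hS : (0 : H →L[ℂ] H) ≤ S) (r : ℝ) (hr : 1 ≤ r)
    (x : H) (hx : ‖x‖ = 1) :
    (Complex.re (inner ℂ (S x) x : ℂ)) ^ r ≤
      Complex.re (inner ℂ ((cfc (fun t : ℝ => t ^ r) S) x) x : ℂ) := by
  have hr0 : (0:ℝ) < r := lt_of_lt_of_le one_pos hr
  have hpos := (ContinuousLinearMap.nonneg_iff_isPositive S).mp hS
  have hsa : IsSelfAdjoint S := hpos.isSelfAdjoint
  have hspec : ∀ t ∈ spectrum ℝ S, 0 ≤ t := fun t ht => spectrum_nonneg_of_nonneg hS ht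
  set s : ℝ := Complex.re (inner ℂ (S x) x : ℂ) with hs_def
  have hs0 : 0 ≤ s := hpos.re_inner_nonneg_left x
  -- positivity of cfc (· ^ r) S
  have hcfcpos : (0 : H →L[ℂ] H) ≤ cfc (fun t : ℝ => t ^ r) S :=
    cfc_nonneg fun t ht => Real.rpow_nonneg (hspec t ht) r
  have hcfc_inner : 0 ≤ Complex.re (inner ℂ ((cfc (fun t : ℝ => t ^ r) S) x) x : ℂ) :=
    ((nonneg_iff_isPositive _).mp hcfcpos).re_inner_nonneg_left x
  rcases eq_or_lt_of_le hs0 with h0 | h0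
  · rw [← h0, Real.zero_rpow hr0.ne']
    exact hcfc_inner
  -- main case s > 0
  set c : ℝ := r * s ^ (r - 1) with hc_def
  set d : ℝ := (r - 1) * s ^ r with hd_def
  have hkey : (0 : H →L[ℂ] H) ≤ cfc (fun t : ℝ => t ^ r - (c * t - d)) S :=
    cfc_nonneg fun t ht => by
      have := young_aux hr hs0 (hspec t ht)
      simp only [hc_def, hd_def]
      nlinarith [this]
  have hcont : ContinuousOn (fun t : ℝ => t ^ r) (spectrum ℝ S) := contOn_rpow r hr0.le _
  have hsplit : cfc (fun t : ℝ => t ^ r - (c * t - d)) S =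
      cfc (fun t : ℝ => t ^ r) S - (c • S - algebraMap ℝ (H →L[ℂ] H) d) := by
    rw [cfc_sub (fun t : ℝ => t ^ r) (fun t : ℝ => c * t - d) S hcont (by fun_prop)]
    congr 1
    rw [cfc_sub (fun t : ℝ => c * t) (fun _ : ℝ => d) S (by fun_prop) (by fun_prop)]
    congr 1
    · rw [cfc_const_mul c (fun t : ℝ => t) S (by fun_prop), cfc_id' ℝ S]
    · exact cfc_const d S
  rw [hsplit] at hkey
  have hineq := ((nonneg_iff_isPositive _).mp hkey).re_inner_nonneg_left x
  have hexpand : Complex.re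
      (inner ℂ ((cfc (fun t : ℝ => t ^ r) S - (c • S - algebraMap ℝ (H →L[ℂ] H) d)) x) x : ℂ) =
      Complex.re (inner ℂ ((cfc (fun t : ℝ => t ^ r) S) x) x : ℂ) - (c * s - d) := by
    have halg : (algebraMap ℝ (H →L[ℂ] H) d) x = d • x := by
      rw [Algebra.algebraMap_eq_smul_one]; simp
    have hxx : (inner ℂ x x : ℂ) = 1 := by
      rw [inner_self_eq_norm_sq_to_K, hx]; norm_num
    simp only [ContinuousLinearMap.sub_apply, ContinuousLinearMap.smul_apply, halg,
      inner_sub_left, Complex.sub_re]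
    rw [re_inner_real_smul, re_inner_real_smul, hxx, Complex.one_re]
    ring
  simp only [RCLike.re_to_complex] at hineq
  rw [hexpand] at hineq
  have hss : s ^ (r - 1) * s = s ^ r := by
    rw [← Real.rpow_add_one h0.ne' (r - 1)]
    norm_num
  have hcs : c * s - d = s ^ r := by
    rw [hc_def, hd_def, mul_assoc, hss]
    ring
  rw [hcs] at hineq
  linarith

lemma opow_oabs_eq (A : H →L[ℂ] H) (r : ℝ) (hr : 0 < r) :
    opow (oabs A) (2 * r) = cfc (fun t : ℝ => t ^ r) (adjoint A * A) := by
  have hsa : IsSelfAdjoint (adjoint A * A) := by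
    rw [← star_eq_adjoint]; exact IsSelfAdjoint.star_mul_self A
  have hpos : (0 : H →L[ℂ] H) ≤ adjoint A * A := by
    rw [← star_eq_adjoint]; exact star_mul_self_nonneg A
  have hspec : ∀ t ∈ spectrum ℝ (adjoint A * A), 0 ≤ t := fun t ht =>
    spectrum_nonneg_of_nonneg hpos ht
  unfold opow oabs
  rw [← cfc_comp (fun t : ℝ => t ^ (2 * r)) Real.sqrt (adjoint A * A) hsa
    (contOn_rpow (2 * r) (by positivity) _) (by fun_prop)]
  apply cfc_congr
  intro t ht
  have ht0 : 0 ≤ t := hspec t ht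
  simp only [Function.comp_apply]
  rw [Real.sqrt_eq_rpow, ← Real.rpow_mul ht0]
  congr 1
  ring

theorem stmt18 (A B : H →L[ℂ] H) (r : ℝ) (hr : 1 ≤ r) :
    (nrad (adjoint B * A)) ^ r ≤ (1/2) * ‖opow (oabs A) (2 * r) + opow (oabs B) (2 * r)‖ := by
  have hr0 : (0:ℝ) < r := lt_of_lt_of_le one_pos hr
  set PA := opow (oabs A) (2 * r) with hPA
  set PB := opow (oabs B) (2 * r) with hPB
  set c : ℝ := (1/2) * ‖PA + PB‖ with hc
  have hc0 : 0 ≤ c := by positivity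
  have hposA : (0 : H →L[ℂ] H) ≤ adjoint A * A := by
    rw [← star_eq_adjoint]; exact star_mul_self_nonneg A
  have hposB : (0 : H →L[ℂ] H) ≤ adjoint B * B := by
    rw [← star_eq_adjoint]; exact star_mul_self_nonneg B
  have key : ∀ x : {x : H // ‖x‖ = 1},
      ‖(inner ℂ ((adjoint B * A) (x : H)) (x : H) : ℂ)‖ ^ r ≤ c := by
    rintro ⟨x, hx⟩
    simp only
    have hinner : (inner ℂ ((adjoint B * A) x) x : ℂ) = inner ℂ (A x) (B x) := by
      rw [ContinuousLinearMap.mul_apply, ContinuousLinearMap.adjoint_inner_left]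
    have hcs : ‖(inner ℂ ((adjoint B * A) x) x : ℂ)‖ ≤ ‖A x‖ * ‖B x‖ := by
      rw [hinner]; exact norm_inner_le_norm _ _
    set a := ‖A x‖ with ha
    set b := ‖B x‖ with hb
    have ha0 : 0 ≤ a := norm_nonneg _
    have hb0 : 0 ≤ b := norm_nonneg _
    have step1 : ‖(inner ℂ ((adjoint B * A) x) x : ℂ)‖ ^ r ≤ a ^ r * b ^ r := by
      rw [← Real.mul_rpow ha0 hb0]
      exact Real.rpow_le_rpow (norm_nonneg _) hcs hr0.le
    have hsq : ∀ u : ℝ, 0 ≤ u → u ^ (2 * r) = (u ^ r) ^ (2 : ℕ) := by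
      intro u hu
      rw [mul_comm 2 r, Real.rpow_mul hu,
        show (2:ℝ) = ((2:ℕ):ℝ) from by norm_num, Real.rpow_natCast]
    have step2 : a ^ r * b ^ r ≤ (a ^ (2 * r) + b ^ (2 * r)) / 2 := by
      rw [hsq a ha0, hsq b hb0]
      nlinarith [sq_nonneg (a ^ r - b ^ r), Real.rpow_nonneg ha0 r, Real.rpow_nonneg hb0 r]
    -- McCarthy for A
    have hinnerA : Complex.re (inner ℂ ((adjoint A * A) x) x : ℂ) = a ^ (2 : ℕ) := by
      rw [ContinuousLinearMap.mul_apply, ContinuousLinearMap.adjoint_inner_left]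
      rw [inner_self_eq_norm_sq_to_K]
      norm_cast
    have hinnerB : Complex.re (inner ℂ ((adjoint B * B) x) x : ℂ) = b ^ (2 : ℕ) := by
      rw [ContinuousLinearMap.mul_apply, ContinuousLinearMap.adjoint_inner_left]
      rw [inner_self_eq_norm_sq_to_K]
      norm_cast
    have hmA : a ^ (2 * r) ≤ Complex.re (inner ℂ (PA x) x : ℂ) := by
      rw [hPA, opow_oabs_eq A r hr0]
      have := mccarthy (adjoint A * A) hposA r hr x hx
      rw [hinnerA] at this
      calc a ^ (2 * r) = ((a ^ (2:ℕ)) : ℝ) ^ r := by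
            rw [← Real.rpow_natCast a 2, ← Real.rpow_mul ha0]; norm_num
        _ ≤ _ := this
    have hmB : b ^ (2 * r) ≤ Complex.re (inner ℂ (PB x) x : ℂ) := by
      rw [hPB, opow_oabs_eq B r hr0]
      have := mccarthy (adjoint B * B) hposB r hr x hx
      rw [hinnerB] at this
      calc b ^ (2 * r) = ((b ^ (2:ℕ)) : ℝ) ^ r := by
            rw [← Real.rpow_natCast b 2, ← Real.rpow_mul hb0]; norm_num
        _ ≤ _ := this
    have hfin : Complex.re (inner ℂ (PA x) x : ℂ) + Complex.re (inner ℂ (PB x) x : ℂ)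
        ≤ ‖PA + PB‖ := by
      have h1 : Complex.re (inner ℂ (PA x) x : ℂ) + Complex.re (inner ℂ (PB x) x : ℂ)
          = Complex.re (inner ℂ ((PA + PB) x) x : ℂ) := by
        simp [ContinuousLinearMap.add_apply, inner_add_left]
      rw [h1]
      calc Complex.re (inner ℂ ((PA + PB) x) x : ℂ)
          ≤ ‖(inner ℂ ((PA + PB) x) x : ℂ)‖ := Complex.re_le_norm _
        _ ≤ ‖(PA + PB) x‖ * ‖x‖ := norm_inner_le_norm _ _
        _ ≤ ‖PA + PB‖ * ‖x‖ * ‖x‖ := by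
            rw [hx]; simpa [hx] using (PA + PB).le_opNorm x
        _ = ‖PA + PB‖ := by rw [hx]; ring
    calc ‖(inner ℂ ((adjoint B * A) x) x : ℂ)‖ ^ r ≤ a ^ r * b ^ r := step1
      _ ≤ (a ^ (2 * r) + b ^ (2 * r)) / 2 := step2
      _ ≤ (Complex.re (inner ℂ (PA x) x : ℂ) + Complex.re (inner ℂ (PB x) x : ℂ)) / 2 := by
          linarith
      _ ≤ ‖PA + PB‖ / 2 := by linarith
      _ = c := by rw [hc]; ring
  have h1 : nrad (adjoint B * A) ≤ c ^ r⁻¹ := by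
    apply Real.iSup_le _ (Real.rpow_nonneg hc0 _)
    intro x
    have hk := key x
    calc ‖(inner ℂ ((adjoint B * A) (x : H)) (x : H) : ℂ)‖
        = (‖(inner ℂ ((adjoint B * A) (x : H)) (x : H) : ℂ)‖ ^ r) ^ r⁻¹ := by
          rw [Real.rpow_rpow_inv (norm_nonneg _) hr0.ne']
      _ ≤ c ^ r⁻¹ := Real.rpow_le_rpow (by positivity) hk (by positivity)
  have h0 : 0 ≤ nrad (adjoint B * A) := Real.iSup_nonneg fun x => norm_nonneg _
  calc (nrad (adjoint B * A)) ^ r ≤ (c ^ r⁻¹) ^ r := Real.rpow_le_rpow h0 h1 hr0.le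
    _ = c := Real.rpow_inv_rpow hc0 hr0.ne'
end

section
/- Let A and B be bounded linear operators on a complex Hilbert space H. Then w(|A|² + i|B|²)² ≤ ‖ |A|⁴ + |B|⁴ ‖, i.e., for positive operators P = |A|² and Q = |B|², w(P + iQ)² ≤ ‖P² + Q²‖. -/
open ContinuousLinearMap Complex

variable {H : Type*} [NormedAddCommGroup H] [InnerProductSpace ℂ H] [CompleteSpace H]

theorem stmt19 (A B : H →L[ℂ] H) :
    (nrad (adjoint A * A + Complex.I • (adjoint B * B))) ^ 2
      ≤ ‖(adjoint A * A) ^ 2 + (adjoint B * B) ^ 2‖ := by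
  set P := adjoint A * A with hP
  set Q := adjoint B * B with hQ
  set M := ‖P ^ 2 + Q ^ 2‖ with hM
  have hM0 : 0 ≤ M := norm_nonneg _
  have hnn : 0 ≤ nrad (P + Complex.I • Q) :=
    Real.iSup_nonneg fun x => norm_nonneg _
  have key : nrad (P + Complex.I • Q) ≤ Real.sqrt M := by
    apply Real.iSup_le _ (Real.sqrt_nonneg _)
    rintro ⟨x, hx⟩
    set p : ℝ := ‖A x‖ ^ 2 with hp
    set q : ℝ := ‖B x‖ ^ 2 with hq
    have hPx : (inner ℂ (P x) x : ℂ) = (p : ℂ) := by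
      simp only [hP, mul_apply_eq_comp, ContinuousLinearMap.adjoint_inner_left]
      rw [inner_self_eq_norm_sq_to_K]
      norm_cast
    have hQx : (inner ℂ (Q x) x : ℂ) = (q : ℂ) := by
      simp only [hQ, mul_apply_eq_comp, ContinuousLinearMap.adjoint_inner_left]
      rw [inner_self_eq_norm_sq_to_K]
      norm_cast
    have hc : (inner ℂ ((P + Complex.I • Q) x) x : ℂ) = (p : ℂ) - Complex.I * q := by
      simp only [add_apply, smul_apply, inner_add_left, inner_smul_left, hPx, hQx]
      simp [Complex.conj_I]; ring
    have hnormc : ‖(inner ℂ ((P + Complex.I • Q) x) x : ℂ)‖ ^ 2 = p ^ 2 + q ^ 2 := by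
      rw [hc, Complex.sq_norm, Complex.normSq_apply]
      simp [Complex.normSq_apply]
      ring
    -- p^2 ≤ ‖P x‖^2
    have hPsa : ContinuousLinearMap.adjoint P = P := by
      rw [hP, ← star_eq_adjoint]
      simp [star_mul, star_eq_adjoint, adjoint_adjoint]
    have hQsa : ContinuousLinearMap.adjoint Q = Q := by
      rw [hQ, ← star_eq_adjoint]
      simp [star_mul, star_eq_adjoint, adjoint_adjoint]
    have hp2 : p ^ 2 ≤ ‖P x‖ ^ 2 := by
      have h1 : p ≤ ‖P x‖ := by
        have := norm_inner_le_norm (𝕜 := ℂ) (P x) x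
        rw [hPx, hx, mul_one] at this
        exact (le_abs_self p).trans (by simpa using this)
      exact pow_le_pow_left₀ (sq_nonneg _) h1 2
    have hq2 : q ^ 2 ≤ ‖Q x‖ ^ 2 := by
      have h1 : q ≤ ‖Q x‖ := by
        have := norm_inner_le_norm (𝕜 := ℂ) (Q x) x
        rw [hQx, hx, mul_one] at this
        exact (le_abs_self q).trans (by simpa using this)
      exact pow_le_pow_left₀ (sq_nonneg _) h1 2
    have hPP : (inner ℂ ((P ^ 2) x) x : ℂ) = (‖P x‖ : ℂ) ^ 2 := by
      rw [pow_two, mul_apply_eq_comp]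
      rw [show P (P x) = (ContinuousLinearMap.adjoint P) (P x) by rw [hPsa]]
      rw [ContinuousLinearMap.adjoint_inner_left, inner_self_eq_norm_sq_to_K]
      norm_cast
    have hQQ : (inner ℂ ((Q ^ 2) x) x : ℂ) = (‖Q x‖ : ℂ) ^ 2 := by
      rw [pow_two, mul_apply_eq_comp]
      rw [show Q (Q x) = (ContinuousLinearMap.adjoint Q) (Q x) by rw [hQsa]]
      rw [ContinuousLinearMap.adjoint_inner_left, inner_self_eq_norm_sq_to_K]
      norm_cast
    have hsum : ‖P x‖ ^ 2 + ‖Q x‖ ^ 2 ≤ M := by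
      have h1 : (inner ℂ ((P ^ 2 + Q ^ 2) x) x : ℂ) = ((‖P x‖ ^ 2 + ‖Q x‖ ^ 2 : ℝ) : ℂ) := by
        rw [add_apply, inner_add_left, hPP, hQQ]; push_cast; ring
      have h2 : ‖(inner ℂ ((P ^ 2 + Q ^ 2) x) x : ℂ)‖ ≤ M := by
        calc ‖(inner ℂ ((P ^ 2 + Q ^ 2) x) x : ℂ)‖ ≤ ‖(P ^ 2 + Q ^ 2) x‖ * ‖x‖ :=
              norm_inner_le_norm _ _
          _ ≤ ‖P ^ 2 + Q ^ 2‖ * ‖x‖ * ‖x‖ := by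
              gcongr; exact le_opNorm _ _
          _ = M := by rw [hx]; ring
      rw [h1] at h2
      have h3 : 0 ≤ ‖P x‖ ^ 2 + ‖Q x‖ ^ 2 := by positivity
      rwa [Complex.norm_real, Real.norm_eq_abs, _root_.abs_of_nonneg h3] at h2
    have hfin : ‖(inner ℂ ((P + Complex.I • Q) x) x : ℂ)‖ ^ 2 ≤ M := by
      rw [hnormc]
      calc p ^ 2 + q ^ 2 ≤ ‖P x‖ ^ 2 + ‖Q x‖ ^ 2 := add_le_add hp2 hq2
        _ ≤ M := hsum
    have := Real.sqrt_le_sqrt hfin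
    rwa [Real.sqrt_sq (norm_nonneg _)] at this
  calc nrad (P + Complex.I • Q) ^ 2 ≤ Real.sqrt M ^ 2 := pow_le_pow_left₀ hnn key 2
    _ = M := Real.sq_sqrt hM0
end
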